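/- Let X be an n-dimensional real Banach space and let {e_i : 1 ≤ i ≤ n} be a 1-suppression unconditional normalized basis of X. If the norm of X is strictly convex or smooth, then there exists ε > 0 such that the set A = {±e_i : i = 1,…,n} is a bounded and separated antipodal subset of the closed unit ball of X with constant d = 1 + ε; consequently H'_α(X) ≥ 2n. -/

import Mathlib

open Metric

noncomputable section

/-- `S` is a bounded and separated antipodal subset of `X` with constant `d`. -/
def IsBSA {X : Type*} [NormedAddCommGroup X] [NormedSpace ℝ X] (S : Set X) (d : ℝ) : Prop :=
  S ⊆ closedBall (0 : X) 1 ∧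
    ∀ x ∈ S, ∀ y ∈ S, x ≠ y → ∃ f : X →L[ℝ] ℝ, ‖f‖ ≤ 1 ∧
      d ≤ f x - f y ∧ ∀ z ∈ S, f y ≤ f z ∧ f z ≤ f x

/-- The strict antipodality condition (with gap `> 1`). -/
def StrictAntipProp {X : Type*} [NormedAddCommGroup X] [NormedSpace ℝ X] (S : Set X) : Prop :=
  ∀ x ∈ S, ∀ y ∈ S, x ≠ y → ∃ f : X →L[ℝ] ℝ, ‖f‖ ≤ 1 ∧
    1 < f x - f y ∧ ∀ z ∈ S, f y ≤ f z ∧ f z ≤ f x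

/-- The strict antipodal Hadwiger number `H'_α(X)`. -/
def strictHalpha (X : Type*) [NormedAddCommGroup X] [NormedSpace ℝ X] : ℕ :=
  sSup {k : ℕ | ∃ S : Finset X, S.card = k ∧ (S : Set X) ⊆ sphere (0 : X) 1 ∧
    StrictAntipProp (S : Set X)}

theorem my_exists_norm_att {X : Type*} [NormedAddCommGroup X] [NormedSpace ℝ X] [FiniteDimensional ℝ X]
    (f : X →L[ℝ] ℝ) : ∃ x : X, ‖x‖ ≤ 1 ∧ f x = ‖f‖ := by
  obtain ⟨x, hx, hmax⟩ := (isCompact_closedBall (0:X) 1).exists_isMaxOn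
    ⟨0, mem_closedBall_self zero_le_one⟩ f.continuous.continuousOn
  have hx1 : ‖x‖ ≤ 1 := by simpa [dist_eq_norm] using hx
  have hfx : f x ≤ ‖f‖ := (le_abs_self _).trans ((f.le_opNorm x).trans
    (mul_le_of_le_one_right (norm_nonneg f) hx1))
  refine ⟨x, hx1, le_antisymm hfx ?_⟩
  refine f.opNorm_le_bound ?_ (fun y => ?_)
  · have := hmax (mem_closedBall_self (zero_le_one (α := ℝ)))
    simpa using this
  · rcases eq_or_ne y 0 with rfl | hy
    · simp
    · have hmem : ‖y‖⁻¹ • y ∈ closedBall (0:X) 1 := by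
        simp [mem_closedBall, dist_eq_norm, norm_smul, abs_of_nonneg,
          inv_mul_cancel₀ (norm_ne_zero_iff.2 hy)]
      have h1 : f (‖y‖⁻¹ • y) ≤ f x := hmax hmem
      have h2 : f (-(‖y‖⁻¹ • y)) ≤ f x := hmax (by
        simpa [mem_closedBall, dist_eq_norm] using
          (by simpa [dist_eq_norm] using hmem : ‖‖y‖⁻¹ • y‖ ≤ 1))
      have h3 : |f (‖y‖⁻¹ • y)| ≤ f x :=
        abs_le.2 ⟨by simpa using neg_le_of_neg_le (by simpa using h2), h1⟩
      rw [map_smul, smul_eq_mul, abs_mul, abs_inv, abs_norm] at h3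
      have hny : (0:ℝ) < ‖y‖ := norm_pos_iff.2 hy
      have h4 : |f y| ≤ f x * ‖y‖ := by
        calc |f y| = ‖y‖ * (‖y‖⁻¹ * |f y|) := by field_simp
        _ ≤ ‖y‖ * f x := by nlinarith
        _ = f x * ‖y‖ := mul_comm _ _
      simpa [Real.norm_eq_abs] using h4

theorem my_key {X : Type*} [NormedAddCommGroup X] [NormedSpace ℝ X] [FiniteDimensional ℝ X]
    (hgeom : StrictConvexSpace ℝ X ∨
      (∀ x : X, x ≠ 0 → ∃! g : X →L[ℝ] ℝ, ‖g‖ = 1 ∧ g x = ‖x‖))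
    (e : X) (he : ‖e‖ = 1) (fi g : X →L[ℝ] ℝ)
    (hfin : ‖fi‖ ≤ 1) (hfie : fi e = 1) (hgn : ‖g‖ ≤ 1) (hge : g e = 0) :
    ‖fi - g‖ < 2 := by
  by_contra hcon
  push_neg at hcon
  have hle : ‖fi - g‖ ≤ 2 := by
    calc ‖fi - g‖ ≤ ‖fi‖ + ‖g‖ := norm_sub_le _ _
    _ ≤ 2 := by linarith
  have heq : ‖fi - g‖ = 2 := le_antisymm hle hcon
  obtain ⟨x, hx1, hxv⟩ := my_exists_norm_att (fi - g)
  rw [heq] at hxv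
  have hfix : fi x ≤ 1 := (le_abs_self _).trans ((fi.le_opNorm x).trans
    (mul_le_of_le_one_right (norm_nonneg fi) hx1 |>.trans hfin))
  have hgx : -1 ≤ g x := by
    have := (neg_abs_le (g x)).trans' (neg_le_neg ((g.le_opNorm x).trans
      (mul_le_of_le_one_right (norm_nonneg g) hx1 |>.trans hgn)))
    linarith [this]
  have hsub : fi x - g x = 2 := by simpa using hxv
  have hfix1 : fi x = 1 := by linarith
  have hgx1 : g x = -1 := by linarith
  have hxnorm : ‖x‖ = 1 := by
    have h1 : (1:ℝ) ≤ ‖x‖ := by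
      have := (fi.le_opNorm x).trans (mul_le_of_le_one_left (norm_nonneg x) hfin)
      calc (1:ℝ) = fi x := hfix1.symm
      _ ≤ |fi x| := le_abs_self _
      _ ≤ ‖x‖ := this
    linarith
  have hx0 : x ≠ 0 := by
    intro h; rw [h] at hxnorm; simp at hxnorm
  rcases hgeom with hsc | hsm
  · -- strict convexity: x = e
    have hadd : ‖x + e‖ = 2 := by
      have h1 : (2:ℝ) = fi (x + e) := by rw [map_add, hfix1, hfie]; ring
      have h2 : fi (x + e) ≤ ‖x + e‖ := (le_abs_self _).trans
        ((fi.le_opNorm _).trans (mul_le_of_le_one_left (norm_nonneg _) hfin))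
      have h3 : ‖x + e‖ ≤ 2 := by
        calc ‖x + e‖ ≤ ‖x‖ + ‖e‖ := norm_add_le _ _
        _ = 2 := by rw [hxnorm, he]; norm_num
      linarith
    have hxe : x = e := eq_of_norm_eq_of_norm_add_eq (by rw [hxnorm, he])
      (by rw [hadd, hxnorm, he]; norm_num)
    rw [hxe, hge] at hgx1
    norm_num at hgx1
  · -- smoothness: fi = -g, contradiction at e
    have hfin1 : ‖fi‖ = 1 := le_antisymm hfin (by
      have := fi.le_opNorm x
      rw [hfix1] at hfix
      have : (1:ℝ) ≤ ‖fi‖ * ‖x‖ := by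
        calc (1:ℝ) = fi x := hfix1.symm
        _ ≤ |fi x| := le_abs_self _
        _ ≤ ‖fi‖ * ‖x‖ := fi.le_opNorm x
      rw [hxnorm, mul_one] at this; exact this)
    have hgn1 : ‖-g‖ = 1 := le_antisymm (by simpa using hgn) (by
      have : (1:ℝ) ≤ ‖-g‖ * ‖x‖ := by
        calc (1:ℝ) = (-g) x := by simp [hgx1]
        _ ≤ |(-g) x| := le_abs_self _
        _ ≤ ‖-g‖ * ‖x‖ := (-g).le_opNorm x
      rw [hxnorm, mul_one] at this; exact this)
    obtain ⟨h, _, huniq⟩ := hsm x hx0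
    have h1 : fi = h := huniq fi ⟨hfin1, by rw [hfix1, hxnorm]⟩
    have h2 : -g = h := huniq (-g) ⟨hgn1, by simp [hgx1, hxnorm]⟩
    have : fi = -g := h1.trans h2.symm
    have := congrArg (fun f : X →L[ℝ] ℝ => f e) this
    simp only [hfie, ContinuousLinearMap.neg_apply, hge, neg_zero] at this
    norm_num at this

theorem my_bdd {X : Type*} [NormedAddCommGroup X] [NormedSpace ℝ X] [FiniteDimensional ℝ X] :
    BddAbove {k : ℕ | ∃ S : Finset X, S.card = k ∧ (S : Set X) ⊆ sphere (0 : X) 1 ∧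
      StrictAntipProp (S : Set X)} := by
  classical
  have hcomp : TotallyBounded (sphere (0:X) 1) := (isCompact_sphere (0:X) 1).totallyBounded
  obtain ⟨t, htfin, htsub⟩ := totallyBounded_iff.1 hcomp (1/2) (by norm_num)
  refine ⟨htfin.toFinset.card, fun k hk => ?_⟩
  obtain ⟨S, hcard, hsph, hanti⟩ := hk
  -- choose a center for each point of the sphere
  have hch : ∀ x : X, ∃ y : X, x ∈ sphere (0:X) 1 → y ∈ t ∧ x ∈ ball y (1/2) := by
    intro x
    by_cases hx : x ∈ sphere (0:X) 1
    · obtain ⟨y, hy, hxy⟩ := Set.mem_iUnion₂.1 (htsub hx)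
      exact ⟨y, fun _ => ⟨hy, hxy⟩⟩
    · exact ⟨0, fun h => absurd h hx⟩
  choose c hc using hch
  -- points of S are pairwise at distance > 1
  have hsep : ∀ x ∈ S, ∀ y ∈ S, x ≠ y → 1 < dist x y := by
    intro x hx y hy hxy
    obtain ⟨f, hf1, hf2, _⟩ := hanti x (by exact_mod_cast hx) y (by exact_mod_cast hy) hxy
    have : f x - f y ≤ ‖x - y‖ := by
      calc f x - f y = f (x - y) := by rw [map_sub]
      _ ≤ |f (x - y)| := le_abs_self _
      _ ≤ ‖f‖ * ‖x - y‖ := f.le_opNorm _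
      _ ≤ ‖x - y‖ := mul_le_of_le_one_left (norm_nonneg _) hf1
    rw [dist_eq_norm]; linarith
  rw [← hcard]
  refine Finset.card_le_card_of_injOn c (fun x hx => ?_) ?_
  · exact htfin.mem_toFinset.2 (hc x (hsph hx)).1
  · intro x hx y hy hcxy
    by_contra hne
    have h1 := (hc x (hsph hx)).2
    have h2 := (hc y (hsph hy)).2
    have hd1 : dist x (c x) < 1/2 := mem_ball.1 h1
    have hd2 : dist y (c y) < 1/2 := mem_ball.1 h2
    have htri : dist x y ≤ dist x (c x) + dist (c y) y := by
      rw [hcxy]; exact dist_triangle _ _ _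
    rw [dist_comm (c y) y] at htri
    have := hsep x (by exact_mod_cast hx) y (by exact_mod_cast hy) hne
    linarith

set_option maxHeartbeats 1000000 in
/-- Let `X` be an `n`-dimensional real Banach space with a
1-suppression unconditional normalized basis `b`. If the norm of `X` is strictly convex
or smooth, then for some `ε > 0` the set `A = {± b i}` is a bounded and separated
antipodal subset of the closed unit ball with constant `d = 1 + ε`; hence
`H'_α(X) ≥ 2n`. -/
theorem suppression_unconditional_pm_isBSA (n : ℕ) (X : Type*)
    [NormedAddCommGroup X] [NormedSpace ℝ X] [FiniteDimensional ℝ X]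
    (hdim : Module.finrank ℝ X = n)
    (b : Module.Basis (Fin n) ℝ X) (hb : ∀ i, ‖b i‖ = 1)
    (hsupp : ∀ (α : Fin n → ℝ) (F : Finset (Fin n)),
      ‖∑ k ∈ F, α k • b k‖ ≤ ‖∑ k : Fin n, α k • b k‖)
    (hgeom : StrictConvexSpace ℝ X ∨
      (∀ x : X, x ≠ 0 → ∃! g : X →L[ℝ] ℝ, ‖g‖ = 1 ∧ g x = ‖x‖))
    (A : Set X) (hA : A = Set.range (fun i => b i) ∪ Set.range (fun i => -(b i))) :
    ∃ ε : ℝ, 0 < ε ∧ IsBSA A (1 + ε) ∧ 2 * n ≤ strictHalpha X := by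
  classical
  set F : Fin n → X →L[ℝ] ℝ := fun i => LinearMap.toContinuousLinearMap (b.coord i) with hF
  have hFval : ∀ i k, F i (b k) = if k = i then 1 else 0 := by
    intro i k
    simp [hF, LinearMap.coe_toContinuousLinearMap', Module.Basis.coord_apply, Module.Basis.repr_self,
      Finsupp.single_apply]
  have hFnorm : ∀ i, ‖F i‖ ≤ 1 := by
    intro i
    refine ContinuousLinearMap.opNorm_le_bound _ zero_le_one (fun x => ?_)
    have hx : ∑ k : Fin n, b.repr x k • b k = x := b.sum_repr x
    have h1 := hsupp (fun k => b.repr x k) {i}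
    rw [hx] at h1
    simp only [Finset.sum_singleton] at h1
    rw [norm_smul, hb i, mul_one] at h1
    have h2 : F i x = b.repr x i := by
      simp [hF, LinearMap.coe_toContinuousLinearMap', Module.Basis.coord_apply]
    rw [one_mul, h2]
    exact h1
  have hns : ∀ (c : ℝ) (g : X →L[ℝ] ℝ), ‖c • g‖ = |c| * ‖g‖ := fun c g => by
    rw [@norm_smul ℝ (X →L[ℝ] ℝ) _ _ _ _ c g, Real.norm_eq_abs]
  set P : Finset (Fin n × Fin n) := Finset.univ.offDiag with hP
  set T : Finset ℝ := insert 1 (P.image (fun p => max ‖F p.1 - F p.2‖ ‖F p.1 + F p.2‖)) with hT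
  have hTne : (1:ℝ) ∈ T := Finset.mem_insert_self _ _
  set C : ℝ := T.max' ⟨1, hTne⟩ with hC
  have hC1 : 1 ≤ C := Finset.le_max' _ _ hTne
  have hC0 : (0:ℝ) < C := lt_of_lt_of_le one_pos hC1
  have hKey : ∀ i j : Fin n, i ≠ j → ‖F i - F j‖ < 2 ∧ ‖F i + F j‖ < 2 := by
    intro i j hij
    have h1 : F i (b i) = 1 := by simp [hFval]
    have h2 : F j (b i) = 0 := by simp [hFval, hij]
    constructor
    · exact my_key hgeom (b i) (hb i) (F i) (F j) (hFnorm i) h1 (hFnorm j) h2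
    · have := my_key hgeom (b i) (hb i) (F i) (-(F j)) (hFnorm i) h1
        (by simpa using hFnorm j) (by simp [h2])
      simpa [sub_neg_eq_add] using this
  have hC2 : C < 2 := by
    rw [hC]; apply (Finset.max'_lt_iff _ _).2
    intro y hy
    rcases Finset.mem_insert.1 hy with rfl | hy
    · norm_num
    · obtain ⟨p, hp, rfl⟩ := Finset.mem_image.1 hy
      have hij : p.1 ≠ p.2 := (Finset.mem_offDiag.1 hp).2.2
      exact max_lt (hKey _ _ hij).1 (hKey _ _ hij).2
  have hCb : ∀ i j : Fin n, i ≠ j → ‖F i - F j‖ ≤ C ∧ ‖F i + F j‖ ≤ C := by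
    intro i j hij
    have hp : (i, j) ∈ P := Finset.mem_offDiag.2 ⟨Finset.mem_univ _, Finset.mem_univ _, hij⟩
    have hm : max ‖F i - F j‖ ‖F i + F j‖ ∈ T :=
      Finset.mem_insert_of_mem (Finset.mem_image.mpr ⟨(i,j), hp, rfl⟩)
    have := Finset.le_max' T _ hm
    exact ⟨(le_max_left _ _).trans this, (le_max_right _ _).trans this⟩
  -- representation of elements of A
  have hmem : ∀ z ∈ A, ∃ (k : Fin n) (u : ℝ), (u = 1 ∨ u = -1) ∧ z = u • b k := by
    intro z hz
    rw [hA] at hz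
    rcases hz with ⟨k, hk⟩ | ⟨k, hk⟩
    · exact ⟨k, 1, Or.inl rfl, by rw [← hk]; simp⟩
    · exact ⟨k, -1, Or.inr rfl, by rw [← hk]; simp⟩
  -- the pairwise functional
  have hpair : ∀ (i j : Fin n) (s t : ℝ), (s = 1 ∨ s = -1) → (t = 1 ∨ t = -1) →
      s • b i ≠ t • b j →
      ∃ f : X →L[ℝ] ℝ, ‖f‖ ≤ 1 ∧ f (s • b i) = C⁻¹ ∧ f (t • b j) = -C⁻¹ ∧
        ∀ (k : Fin n) (u : ℝ), (u = 1 ∨ u = -1) → |f (u • b k)| ≤ C⁻¹ := by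
    intro i j s t hs ht hne
    by_cases hij : i = j
    · subst hij
      have hst : t = -s := by
        rcases hs with rfl | rfl <;> rcases ht with rfl | rfl
        · exact absurd rfl hne
        · norm_num
        · norm_num
        · exact absurd rfl hne
      refine ⟨C⁻¹ • (s • F i), ?_, ?_, ?_, ?_⟩
      · have habs : ‖C⁻¹ • s • F i‖ = C⁻¹ * (|s| * ‖F i‖) := by
          rw [hns, hns, abs_inv, abs_of_pos hC0]
        have hs1 : |s| = 1 := by rcases hs with rfl | rfl <;> norm_num
        rw [habs, hs1, one_mul]
        calc C⁻¹ * ‖F i‖ ≤ C⁻¹ * 1 :=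
              mul_le_mul_of_nonneg_left (hFnorm i) (inv_nonneg.2 hC0.le)
        _ ≤ 1 := by rw [mul_one]; exact inv_le_one_of_one_le₀ hC1
      · simp only [ContinuousLinearMap.smul_apply, map_smul, smul_eq_mul, hFval]
        rcases hs with rfl | rfl <;> norm_num
      · simp only [ContinuousLinearMap.smul_apply, map_smul, smul_eq_mul, hFval, hst]
        rcases hs with rfl | rfl <;> norm_num
      · intro k u hu
        simp only [ContinuousLinearMap.smul_apply, map_smul, smul_eq_mul, hFval]
        split_ifs <;> rcases hs with rfl | rfl <;> rcases hu with rfl | rfl <;>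
          simp [abs_inv, abs_of_pos hC0] <;> positivity
    · -- i ≠ j
      have hnorm : ‖s • F i - t • F j‖ ≤ C := by
        rcases hs with rfl | rfl <;> rcases ht with rfl | rfl
        · simpa using (hCb i j hij).1
        · have : (1:ℝ) • F i - (-1:ℝ) • F j = F i + F j := by
            ext x; simp only [ContinuousLinearMap.sub_apply, ContinuousLinearMap.smul_apply,
              ContinuousLinearMap.add_apply, ContinuousLinearMap.neg_apply, smul_eq_mul]; ring
          rw [this]; exact (hCb i j hij).2
        · have : (-1:ℝ) • F i - (1:ℝ) • F j = -(F i + F j) := by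
            ext x; simp only [ContinuousLinearMap.sub_apply, ContinuousLinearMap.smul_apply,
              ContinuousLinearMap.add_apply, ContinuousLinearMap.neg_apply, smul_eq_mul]; ring
          rw [this, norm_neg]; exact (hCb i j hij).2
        · have : (-1:ℝ) • F i - (-1:ℝ) • F j = -(F i - F j) := by
            ext x; simp only [ContinuousLinearMap.sub_apply, ContinuousLinearMap.smul_apply,
              ContinuousLinearMap.add_apply, ContinuousLinearMap.neg_apply, smul_eq_mul]; ring
          rw [this, norm_neg]; exact (hCb i j hij).1
      refine ⟨C⁻¹ • (s • F i - t • F j), ?_, ?_, ?_, ?_⟩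
      · have habs : ‖C⁻¹ • (s • F i - t • F j)‖ = C⁻¹ * ‖s • F i - t • F j‖ := by
          rw [hns, abs_inv, abs_of_pos hC0]
        rw [habs, inv_mul_le_iff₀ hC0, mul_one]
        exact hnorm
      · simp only [ContinuousLinearMap.smul_apply, ContinuousLinearMap.sub_apply,
          map_smul, smul_eq_mul, hFval, hij, Ne.symm hij]
        rcases hs with rfl | rfl <;> norm_num
      · simp only [ContinuousLinearMap.smul_apply, ContinuousLinearMap.sub_apply,
          map_smul, smul_eq_mul, hFval, hij, Ne.symm hij]
        rcases ht with rfl | rfl <;> norm_num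
      · intro k u hu
        simp only [ContinuousLinearMap.smul_apply, ContinuousLinearMap.sub_apply,
          map_smul, smul_eq_mul, hFval]
        have hCi : |C⁻¹| = C⁻¹ := by rw [abs_inv, abs_of_pos hC0]
        split_ifs with h1 h2 h2
        · exact absurd (h1 ▸ h2 : i = j) hij
        · rcases hs with rfl | rfl <;> rcases hu with rfl | rfl <;>
            simp [abs_mul, hCi] <;> norm_num
        · rcases ht with rfl | rfl <;> rcases hu with rfl | rfl <;>
            simp [abs_mul, hCi] <;> norm_num
        · simp [abs_of_pos hC0]; positivity
  -- conclusion
  have hCinv1 : 1 < 2/C := by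
    rw [lt_div_iff₀ hC0]; linarith
  have hnormz : ∀ (k : Fin n) (u : ℝ), (u = 1 ∨ u = -1) → ‖u • b k‖ = 1 := by
    intro k u hu
    rw [norm_smul, hb k, mul_one, Real.norm_eq_abs]
    rcases hu with rfl | rfl <;> norm_num
  have hBSA : IsBSA A (2/C) := by
    constructor
    · intro z hz
      obtain ⟨k, u, hu, rfl⟩ := hmem z hz
      simp [mem_closedBall, dist_eq_norm, hnormz k u hu]
    · intro x hx y hy hxy
      obtain ⟨i, s, hs, rfl⟩ := hmem x hx
      obtain ⟨j, t, ht, rfl⟩ := hmem y hy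
      obtain ⟨f, hf1, hf2, hf3, hf4⟩ := hpair i j s t hs ht hxy
      refine ⟨f, hf1, ?_, ?_⟩
      · rw [hf2, hf3, div_eq_mul_inv]; linarith
      · intro z hz
        obtain ⟨k, u, hu, rfl⟩ := hmem z hz
        have habs := abs_le.1 (hf4 k u hu)
        rw [hf2, hf3]
        exact ⟨habs.1, habs.2⟩
  refine ⟨2/C - 1, by linarith, ?_, ?_⟩
  · have h21 : 1 + (2/C - 1) = 2/C := by ring
    rw [h21]; exact hBSA
  · set S : Finset X := Finset.image b Finset.univ ∪
      Finset.image (fun i => -(b i)) Finset.univ with hS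
    have hScoe : (S : Set X) = A := by
      rw [hA, hS]
      simp only [Finset.coe_union, Finset.coe_image, Finset.coe_univ, Set.image_univ]
    have hbne : ∀ i j, b i ≠ -(b j) := by
      intro i j h
      have h1 := congrArg (F i) h
      rw [hFval, map_neg, hFval] at h1
      simp only [if_pos rfl] at h1
      split_ifs at h1 <;> norm_num at h1
    have hcard : S.card = 2 * n := by
      rw [hS, Finset.card_union_of_disjoint, Finset.card_image_of_injective _ b.injective,
        Finset.card_image_of_injective _ (fun i j h => b.injective (neg_injective h)),
        Finset.card_univ, Fintype.card_fin]
      · ring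
      · rw [Finset.disjoint_left]
        rintro x hx1 hx2
        obtain ⟨i, _, rfl⟩ := Finset.mem_image.1 hx1
        obtain ⟨j, _, hj⟩ := Finset.mem_image.1 hx2
        exact hbne i j hj.symm
    have hsub : (S : Set X) ⊆ sphere (0:X) 1 := by
      rw [hScoe]
      intro z hz
      obtain ⟨k, u, hu, rfl⟩ := hmem z hz
      simp [mem_sphere, dist_eq_norm, hnormz k u hu]
    have hprop : StrictAntipProp (S : Set X) := by
      rw [hScoe]
      intro x hx y hy hxy
      obtain ⟨f, hf1, hf2, hf3⟩ := hBSA.2 x hx y hy hxy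
      exact ⟨f, hf1, lt_of_lt_of_le hCinv1 hf2, hf3⟩
    exact le_csSup my_bdd ⟨S, hcard, hsub, hprop⟩

end
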